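/- Let p : ℝ with p > 0, and consider the circle AddCircle p = ℝ / (p ℤ) equipped with its standard quotient metric (induced by the quotient norm of the real line by the discrete subgroup of multiples of p). Then every metrically convex function u : AddCircle p → ℝ is constant. -/

import Mathlib

/-- `z` lies (metrically) between `x` and `y`. -/
def Between {X : Type*} [MetricSpace X] (x z y : X) : Prop :=
  dist x z + dist z y = dist x y

/-- A function on a metric space is metrically convex. -/
def MetricConvexFun {X : Type*} [MetricSpace X] (u : X → ℝ) : Prop :=
  ∀ x y : X, x ≠ y → ∀ z : X, Between x z y →
    u z ≤ (dist z y / dist x y) * u x + (dist x z / dist x y) * u y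

/-- A function on a metric space is metrically quasiconvex. -/
def MetricQuasiconvexFun {X : Type*} [MetricSpace X] (u : X → ℝ) : Prop :=
  ∀ x y z : X, Between x z y → u z ≤ max (u x) (u y)

/-- A subset of a metric space is metrically convex. -/
def MetricConvexSet {X : Type*} [MetricSpace X] (S : Set X) : Prop :=
  ∀ x ∈ S, ∀ y ∈ S, ∀ z : X, Between x z y → z ∈ S

lemma aux_round (t : ℝ) : |t - round t| + |t + 1/2 - round (t + 1/2)| = 1/2 := by
  rw [abs_sub_round_eq_min, abs_sub_round_eq_min]
  have hf0 := Int.fract_nonneg t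
  have hf1 := Int.fract_lt_one t
  have hfr : t = Int.fract t + (⌊t⌋ : ℝ) := by rw [Int.fract]; ring
  rcases lt_or_ge (Int.fract t) (1/2) with h | h
  · have h2 : Int.fract (t + 1/2) = Int.fract t + 1/2 := by
      have : t + 1/2 = (Int.fract t + 1/2) + (⌊t⌋ : ℝ) := by linarith
      rw [this, Int.fract_add_intCast, Int.fract_eq_self.mpr ⟨by linarith, by linarith⟩]
    rw [h2, min_eq_left (by linarith), min_eq_right (by linarith)]; ring
  · have h2 : Int.fract (t + 1/2) = Int.fract t - 1/2 := by
      have : t + 1/2 = (Int.fract t - 1/2) + ((⌊t⌋ + 1 : ℤ) : ℝ) := by push_cast; linarith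
      rw [this, Int.fract_add_intCast, Int.fract_eq_self.mpr ⟨by linarith, by linarith⟩]
    rw [h2, min_eq_right (by linarith), min_eq_left (by linarith)]; ring

lemma aux_key (p : ℝ) [hp : Fact (0 < p)] (a : AddCircle p) :
    ‖a‖ + ‖a + ((p/2 : ℝ) : AddCircle p)‖ = p/2 := by
  induction a using QuotientAddGroup.induction_on with
  | H r =>
    have hco : ((r : ℝ) : AddCircle p) + ((p/2 : ℝ) : AddCircle p)
        = ((r + p/2 : ℝ) : AddCircle p) := by norm_cast
    rw [hco, AddCircle.norm_eq' p hp.out, AddCircle.norm_eq' p hp.out]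
    have hp0 : p ≠ 0 := hp.out.ne'
    have ht : p⁻¹ * (r + p/2) = p⁻¹ * r + 1/2 := by field_simp
    rw [ht, ← mul_add, aux_round]
    ring

set_option maxHeartbeats 1000000 in
theorem metricConvex_on_addCircle_constant (p : ℝ) [hp : Fact (0 < p)]
    (u : AddCircle p → ℝ) (hu : MetricConvexFun u) :
    ∀ x y : AddCircle p, u x = u y := by
  have hp0 : p ≠ 0 := hp.out.ne'
  have hs : (0 : ℝ) < p/2 := by linarith [hp.out]
  set c : AddCircle p := ((p/2 : ℝ) : AddCircle p) with hc
  have key : ∀ a : AddCircle p, ‖a‖ + ‖a + c‖ = p/2 := aux_key p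
  have hnc : ‖c‖ = p/2 := by
    rw [hc, AddCircle.norm_half_period_eq, abs_of_pos hp.out]
  have hcc : c + c = 0 := by
    rw [hc, show ((p/2 : ℝ) : AddCircle p) + ((p/2 : ℝ) : AddCircle p)
      = ((p/2 + p/2 : ℝ) : AddCircle p) from by norm_cast,
      show p/2 + p/2 = p from by ring, AddCircle.coe_period]
  have hnegc : -c = c := neg_eq_of_add_eq_zero_left hcc
  have hsub : ∀ a b : AddCircle p, a - (b + c) = (a - b) + c := by
    intro a b
    rw [sub_add_eq_sub_sub, sub_eq_add_neg (a - b), hnegc]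
  have hnn : ∀ a : AddCircle p, ‖-a + c‖ = ‖a + c‖ := by
    intro a
    rw [show -a + c = -(a - c) from by abel, norm_neg, sub_eq_add_neg, hnegc]
  have hd : ∀ w v : AddCircle p, dist w (w + v) = ‖v‖ := by
    intro w v
    rw [dist_eq_norm, sub_add_eq_sub_sub, sub_self, zero_sub, norm_neg]
  have hdxy : ∀ x : AddCircle p, dist x (x + c) = p/2 := fun x => by rw [hd, hnc]
  have hne : ∀ x : AddCircle p, x ≠ x + c := by
    intro x h
    have h1 := hdxy x
    rw [← h, dist_self] at h1
    linarith
  have hbtw : ∀ x z : AddCircle p, Between x z (x + c) := by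
    intro x z
    show dist x z + dist z (x + c) = dist x (x + c)
    rw [hdxy, dist_comm x z, dist_eq_norm, dist_eq_norm, hsub, key]
  -- the exact affine formula
  have haff : ∀ x z : AddCircle p,
      u z = (dist z (x+c) / (p/2)) * u x + (dist x z / (p/2)) * u (x+c) := by
    intro x z
    have hsum : dist x z + dist z (x + c) = p/2 := by
      have h := hbtw x z
      unfold Between at h
      rw [hdxy] at h
      exact h
    set na := dist x z with hna
    set nb := dist z (x + c) with hnb
    have hnb' : nb = ‖(z - x) + c‖ := by rw [hnb, dist_eq_norm, hsub]
    have e1 : dist x (z + c) = nb := by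
      rw [dist_eq_norm, hsub, show x - z = -(z - x) from by abel, hnn, ← hnb']
    have e2 : dist (z + c) (x + c) = na := by rw [dist_add_right, dist_comm, ← hna]
    have e3 : dist (x + c) (z + c) = na := by rw [dist_add_right, hna]
    have conv : ∀ k l P Q R : ℝ, R ≤ k/(p/2)*P + l/(p/2)*Q ↔ R * (p/2) ≤ k*P + l*Q := by
      intro k l P Q R
      rw [div_mul_eq_mul_div, div_mul_eq_mul_div, ← add_div, le_div_iff₀ hs]
    have h1 := hu x (x+c) (hne x) z (hbtw x z)
    rw [hdxy, ← hna, ← hnb] at h1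
    have h2 := hu x (x+c) (hne x) (z+c) (hbtw x (z+c))
    rw [hdxy, e1, e2] at h2
    have h3 := hu z (z+c) (hne z) x (hbtw z x)
    rw [hdxy, e1, dist_comm z x, ← hna] at h3
    have h4 := hu z (z+c) (hne z) (x+c) (hbtw z (x+c))
    rw [hdxy, e3, ← hnb] at h4
    have H1 := (conv _ _ _ _ _).mp h1
    have H2 := (conv _ _ _ _ _).mp h2
    have H3 := (conv _ _ _ _ _).mp h3
    have H4 := (conv _ _ _ _ _).mp h4
    rw [← hsum] at H1 H2 H3 H4
    have hpos : (0:ℝ) < na + nb := by rw [hsum]; exact hs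
    have hAB : u x + u (x+c) ≤ u z + u (z+c) := by
      have hmul : (u x + u (x+c)) * (na + nb) ≤ (u z + u (z+c)) * (na + nb) := by
        nlinarith [H3, H4]
      exact le_of_mul_le_mul_right hmul hpos
    have hmul2 := mul_le_mul_of_nonneg_right hAB hpos.le
    have hC : u z * (na + nb) = nb * u x + na * u (x+c) := by
      apply le_antisymm H1
      nlinarith [H2, hmul2]
    rw [hsum] at hC
    rw [div_mul_eq_mul_div, div_mul_eq_mul_div, ← add_div, eq_div_iff hs.ne']
    linarith [hC]
  -- antipodal values agree
  have hanti : ∀ x : AddCircle p, u (x + c) = u x := by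
    intro x
    set q : AddCircle p := ((p/4 : ℝ) : AddCircle p) with hqdef
    have hp4 : (0:ℝ) < p/4 := by linarith [hp.out]
    have hq : ‖q‖ = p/4 := by
      have h := (AddCircle.norm_coe_eq_abs_iff p (x := p/4) hp0).mpr
        (by rw [abs_of_pos hp4, abs_of_pos hp.out]; linarith)
      rw [hqdef, h, abs_of_pos hp4]
    have hq' : ‖q + c‖ = p/4 := by have := key q; linarith
    have dxm : dist x (x + q) = p/4 := by rw [hd, hq]
    have dmy : dist (x + q) (x + c) = p/4 := by
      rw [dist_add_left, dist_eq_norm, sub_eq_add_neg, hnegc, hq']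
    have dxm' : dist x (x + q + c) = p/4 := by
      rw [add_assoc, hd, hq']
    have dmy' : dist (x + q + c) (x + c) = p/4 := by
      rw [dist_eq_norm, show x + q + c - (x + c) = q from by abel, hq]
    have hr : p/4/(p/2) = 1/2 := by
      field_simp
      ring
    have hm := haff x (x + q)
    rw [dmy, dxm, hr] at hm
    have hm' := haff x (x + q + c)
    rw [dmy', dxm', hr] at hm'
    have hx := haff (x + q) x
    rw [dxm', dist_comm (x+q) x, dxm, hr] at hx
    linarith [hm, hm', hx]
  intro x y
  have hsum : dist x y + dist y (x + c) = p/2 := by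
    have h := hbtw x y
    unfold Between at h
    rw [hdxy] at h
    exact h
  have h := haff x y
  rw [hanti x] at h
  have hco : dist y (x+c) / (p/2) + dist x y / (p/2) = 1 := by
    rw [← add_div, div_eq_one_iff_eq hs.ne']
    linarith
  rw [h]
  linear_combination (-(u x)) * hco
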